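/- arXiv:1109.5604 — 3 statements merged into one kernel-verified Lean document; each statement's English description precedes it below -/
import Mathlib

section
/- Let F : ℝ → ℝ be C¹ with F(±1) = 0, F > 0 on (−1,1), and F' locally Lipschitz. If H : ℝ → ℝ is a C² solution of H'' = F'(H) with H(x) → −1 as x → −∞ and H(x) → 1 as x → +∞ and H' → 0 at ±∞, then −1 < H(x) < 1 and H'(x) > 0 for all x ∈ ℝ. -/
open Real Filter Set

private lemma deriv_lim_atTop {g : ℝ → ℝ} (hg : Differentiable ℝ g)
    (h0 : Tendsto g atTop (nhds 0)) {c : ℝ}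
    (hc : Tendsto (deriv g) atTop (nhds c)) : c = 0 := by
  by_contra hne
  have hpos : 0 < |c| := abs_pos.mpr hne
  have e1 : ∀ᶠ y in atTop, |deriv g y - c| < |c|/2 := by
    have := hc.eventually (Metric.ball_mem_nhds c (by positivity : (0:ℝ) < |c|/2))
    simpa [Metric.mem_ball, Real.dist_eq] using this
  have e2 : ∀ᶠ y in atTop, |g y| < |c|/8 := by
    have := h0.eventually (Metric.ball_mem_nhds (0:ℝ) (by positivity : (0:ℝ) < |c|/8))
    simpa [Metric.mem_ball, Real.dist_eq] using this
  obtain ⟨x₀, h⟩ := eventually_atTop.mp (e1.and e2)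
  obtain ⟨ξ, hξm, hξ⟩ := exists_deriv_eq_slope g (by linarith : x₀ < x₀ + 1)
    hg.continuous.continuousOn hg.differentiableOn
  have h1 := (h ξ hξm.1.le).1
  have h2 := (h x₀ le_rfl).2
  have h3 := (h (x₀+1) (by linarith)).2
  have hs : deriv g ξ = g (x₀+1) - g x₀ := by rw [hξ]; ring_nf
  have habs : |g (x₀+1) - g x₀| ≤ |g (x₀+1)| + |g x₀| := abs_sub _ _
  rw [hs] at h1
  have e := abs_sub_abs_le_abs_sub c (g (x₀+1) - g x₀)
  have e2 : |c - (g (x₀+1) - g x₀)| = |g (x₀+1) - g x₀ - c| := abs_sub_comm _ _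
  linarith

private lemma deriv_lim_atBot {g : ℝ → ℝ} (hg : Differentiable ℝ g)
    (h0 : Tendsto g atBot (nhds 0)) {c : ℝ}
    (hc : Tendsto (deriv g) atBot (nhds c)) : c = 0 := by
  by_contra hne
  have hpos : 0 < |c| := abs_pos.mpr hne
  have e1 : ∀ᶠ y in atBot, |deriv g y - c| < |c|/2 := by
    have := hc.eventually (Metric.ball_mem_nhds c (by positivity : (0:ℝ) < |c|/2))
    simpa [Metric.mem_ball, Real.dist_eq] using this
  have e2 : ∀ᶠ y in atBot, |g y| < |c|/8 := by
    have := h0.eventually (Metric.ball_mem_nhds (0:ℝ) (by positivity : (0:ℝ) < |c|/8))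
    simpa [Metric.mem_ball, Real.dist_eq] using this
  obtain ⟨x₀, h⟩ := eventually_atBot.mp (e1.and e2)
  obtain ⟨ξ, hξm, hξ⟩ := exists_deriv_eq_slope g (by linarith : x₀ - 1 < x₀)
    hg.continuous.continuousOn hg.differentiableOn
  have h1 := (h ξ hξm.2.le).1
  have h2 := (h x₀ le_rfl).2
  have h3 := (h (x₀-1) (by linarith)).2
  have hs : deriv g ξ = g x₀ - g (x₀-1) := by rw [hξ]; ring_nf
  have habs : |g x₀ - g (x₀-1)| ≤ |g x₀| + |g (x₀-1)| := abs_sub _ _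
  rw [hs] at h1
  have e := abs_sub_abs_le_abs_sub c (g x₀ - g (x₀-1))
  have e2 : |c - (g x₀ - g (x₀-1))| = |g x₀ - g (x₀-1) - c| := abs_sub_comm _ _
  linarith

private lemma vanish_fwd {u : ℝ → ℝ} (hu : Differentiable ℝ u) (L a b : ℝ)
    (hb : ∀ t ∈ Icc a b, |deriv u t| ≤ L * |u t|) (ha0 : u a = 0) :
    ∀ t ∈ Icc a b, u t = 0 := by
  intro t ht
  have hg := norm_le_gronwallBound_of_norm_deriv_right_le (f := u) (f' := deriv u)
    (δ := 0) (K := L) (ε := 0) (a := a) (b := b)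
    hu.continuous.continuousOn
    (fun x _ => (hu x).hasDerivAt.hasDerivWithinAt)
    (by simp [ha0])
    (fun x hx => by simpa using hb x ⟨hx.1, hx.2.le⟩)
    t ht
  have h0 : gronwallBound 0 L 0 (t - a) = 0 := by simp [gronwallBound]
  rw [h0] at hg
  have : |u t| ≤ 0 := by simpa using hg
  exact abs_eq_zero.mp (le_antisymm this (abs_nonneg _))

private lemma vanish_bwd {u : ℝ → ℝ} (hu : Differentiable ℝ u) (L a b : ℝ)
    (hb : ∀ t ∈ Icc a b, |deriv u t| ≤ L * |u t|) (hb0 : u b = 0) :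
    ∀ t ∈ Icc a b, u t = 0 := by
  set w : ℝ → ℝ := fun t => u (a + b - t) with hw
  have hid : Differentiable ℝ (fun t : ℝ => a + b - t) :=
    (differentiable_const _).sub differentiable_id
  have hwd : Differentiable ℝ w := hu.comp hid
  have hwderiv : ∀ t, deriv w t = -deriv u (a + b - t) := by
    intro t
    have h1 : HasDerivAt (fun t : ℝ => a + b - t) (-1) t := by
      simpa using (hasDerivAt_id t).const_sub (a + b)
    have h2 := ((hu (a+b-t)).hasDerivAt.comp t h1)
    have := h2.deriv
    exact (show deriv w t = deriv u (a + b - t) * -1 from this).trans (by ring)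
  have key : ∀ t ∈ Icc a b, w t = 0 := by
    apply vanish_fwd hwd L a b
    · intro t ht
      rw [hwderiv, abs_neg]
      exact hb _ ⟨by linarith [ht.2], by linarith [ht.1]⟩
    · show u (a + b - a) = 0
      rw [show a + b - a = b by ring]; exact hb0
  intro t ht
  have := key (a + b - t) ⟨by linarith [ht.2], by linarith [ht.1]⟩
  show u t = 0
  rw [show t = a + b - (a + b - t) by ring]
  exact this

private lemma pinned (H : ℝ → ℝ) (c r L : ℝ) (hr : 0 < r)
    (hHd : Differentiable ℝ H)
    (hb : ∀ x, |H x - c| ≤ r → |deriv H x| ≤ L * |H x - c|)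
    (x₀ : ℝ) (h0 : H x₀ = c) : ∀ x, H x = c := by
  have hclosed : IsClosed {x : ℝ | H x = c} := isClosed_eq hHd.continuous continuous_const
  have hopen : IsOpen {x : ℝ | H x = c} := by
    rw [Metric.isOpen_iff]
    intro y hy
    obtain ⟨δ, hδ, hδ'⟩ := Metric.continuousAt_iff.mp hHd.continuous.continuousAt r hr
    refine ⟨δ/2, by linarith, ?_⟩
    have hy' : H y = c := hy
    have hsmall : ∀ t, |t - y| ≤ δ/2 → |H t - c| ≤ r := by
      intro t ht
      have h1 : dist t y < δ := by rw [Real.dist_eq]; linarith [ht]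
      have h2 := hδ' h1
      rw [Real.dist_eq, hy'] at h2
      exact h2.le
    have hud : Differentiable ℝ (fun t => H t - c) := hHd.sub_const c
    have hbnd : ∀ t, |t - y| ≤ δ/2 → |deriv (fun t => H t - c) t| ≤ L * |H t - c| := by
      intro t ht
      rw [deriv_sub_const]
      exact hb t (hsmall t ht)
    have hfwd := vanish_fwd hud L y (y + δ/2)
      (fun t ht => hbnd t (by rw [abs_le]; exact ⟨by linarith [ht.1], by linarith [ht.2]⟩))
      (by simp [hy'])
    have hbwd := vanish_bwd hud L (y - δ/2) y
      (fun t ht => hbnd t (by rw [abs_le]; exact ⟨by linarith [ht.1], by linarith [ht.2]⟩))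
      (by simp [hy'])
    intro z hz
    rw [Metric.mem_ball, Real.dist_eq] at hz
    obtain ⟨hz1, hz2⟩ := abs_lt.mp hz
    rcases le_total y z with hle | hle
    · have := hfwd z ⟨hle, by linarith⟩
      show H z = c
      linarith [this]
    · have := hbwd z ⟨by linarith, hle⟩
      show H z = c
      linarith [this]
  have huniv : {x : ℝ | H x = c} = univ := IsClopen.eq_univ ⟨hclosed, hopen⟩ ⟨x₀, h0⟩
  intro x
  have : x ∈ {x : ℝ | H x = c} := huniv ▸ mem_univ x
  exact this

private lemma quad_bound {F : ℝ → ℝ} (hFd : Differentiable ℝ F) (c : ℝ)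
    (hFc : F c = 0) (hF'c : deriv F c = 0) (hlip : LocallyLipschitz (deriv F)) :
    ∃ r > 0, ∃ M : ℝ, 0 ≤ M ∧ ∀ s, |s - c| ≤ r → F s ≤ M * (s - c)^2 := by
  obtain ⟨K, t, ht, hK⟩ := hlip c
  obtain ⟨r, hr, hrt⟩ := Metric.nhds_basis_closedBall.mem_iff.mp ht
  refine ⟨r, hr, K, K.coe_nonneg, ?_⟩
  have hd : ∀ s, |s - c| ≤ r → |deriv F s| ≤ K * |s - c| := by
    intro s hs
    have h1 : s ∈ t := hrt (by simpa [Metric.mem_closedBall, Real.dist_eq] using hs)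
    have h2 : c ∈ t := hrt (by simp [Metric.mem_closedBall, hr.le])
    have := hK.dist_le_mul s h1 c h2
    simpa [Real.dist_eq, hF'c] using this
  set φ : ℝ → ℝ := fun s => K*(s-c)^2 - F s with hφ
  have hφd : ∀ s, HasDerivAt φ (K*(2*(s-c)) - deriv F s) s := by
    intro s
    have h1 : HasDerivAt (fun s : ℝ => (s - c)^2) (2*(s-c)) s := by
      simpa using (((hasDerivAt_id s).sub_const c).fun_pow 2)
    exact (h1.const_mul (K:ℝ)).sub (hFd s).hasDerivAt
  have hφdiff : Differentiable ℝ φ := fun s => (hφd s).differentiableAt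
  intro s hs
  obtain ⟨hs1, hs2⟩ := abs_le.mp hs
  rcases le_total c s with hcs | hcs
  · have hmono : MonotoneOn φ (Icc c (c+r)) := by
      apply monotoneOn_of_deriv_nonneg (convex_Icc _ _) hφdiff.continuous.continuousOn
        hφdiff.differentiableOn
      intro x hx
      rw [interior_Icc] at hx
      rw [(hφd x).deriv]
      have hxc : (0:ℝ) ≤ x - c := by linarith [hx.1]
      have h1 := hd x (by rw [abs_of_nonneg hxc]; linarith [hx.2])
      rw [abs_of_nonneg hxc] at h1
      have h2 : deriv F x ≤ |deriv F x| := le_abs_self _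
      have h3 : (0:ℝ) ≤ (K:ℝ) * (x - c) := mul_nonneg K.coe_nonneg hxc
      nlinarith
    have := hmono ⟨le_rfl, by linarith⟩ ⟨hcs, by linarith⟩ hcs
    have hφc : φ c = 0 := by simp [hφ, hFc]
    rw [hφc] at this
    simp only [hφ] at this
    linarith
  · have hanti : AntitoneOn φ (Icc (c-r) c) := by
      apply antitoneOn_of_deriv_nonpos (convex_Icc _ _) hφdiff.continuous.continuousOn
        hφdiff.differentiableOn
      intro x hx
      rw [interior_Icc] at hx
      rw [(hφd x).deriv]
      have hxc : x - c ≤ 0 := by linarith [hx.2]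
      have h1 := hd x (by rw [abs_of_nonpos hxc]; linarith [hx.1])
      rw [abs_of_nonpos hxc] at h1
      have h2 : -|deriv F x| ≤ deriv F x := neg_abs_le _
      have h3 : (K:ℝ) * (x - c) ≤ 0 := mul_nonpos_of_nonneg_of_nonpos K.coe_nonneg hxc
      nlinarith
    have := hanti ⟨by linarith, hcs⟩ ⟨by linarith, le_rfl⟩ hcs
    have hφc : φ c = 0 := by simp [hφ, hFc]
    rw [hφc] at this
    simp only [hφ] at this
    linarith

theorem heteroclinic_monotone_and_pinned
    (F H : ℝ → ℝ)
    (hF : ContDiff ℝ 1 F) (hF1 : F 1 = 0) (hFm1 : F (-1) = 0)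
    (hFpos : ∀ s ∈ Ioo (-1 : ℝ) 1, 0 < F s)
    (hlip : LocallyLipschitz (deriv F))
    (hH : ContDiff ℝ 2 H)
    (hode : ∀ x : ℝ, deriv (deriv H) x = deriv F (H x))
    (hlim_top : Tendsto H atTop (nhds 1))
    (hlim_bot : Tendsto H atBot (nhds (-1)))
    (hlim'_top : Tendsto (deriv H) atTop (nhds 0))
    (hlim'_bot : Tendsto (deriv H) atBot (nhds 0)) :
    ∀ x : ℝ, (-1 < H x ∧ H x < 1) ∧ 0 < deriv H x := by
  have hH2 : ContDiff ℝ ((1:ℕ)+1) H := by exact_mod_cast hH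
  have hHd : Differentiable ℝ H := (contDiff_succ_iff_deriv.mp hH2).1
  have hH'cd : ContDiff ℝ 1 (deriv H) := (contDiff_succ_iff_deriv.mp hH2).2.2
  have hH'd : Differentiable ℝ (deriv H) := hH'cd.differentiable one_ne_zero
  have hH'c : Continuous (deriv H) := hH'd.continuous
  have hFd : Differentiable ℝ F := hF.differentiable one_ne_zero
  have hF'c : Continuous (deriv F) := hF.continuous_deriv le_rfl
  -- first integral
  set E : ℝ → ℝ := fun x => (deriv H x)^2 - 2 * F (H x) with hE
  have hEderiv : ∀ x, HasDerivAt E 0 x := by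
    intro x
    have h1 : HasDerivAt (deriv H) (deriv F (H x)) x := by
      have := (hH'd x).hasDerivAt
      rwa [hode x] at this
    have h2 : HasDerivAt (fun x => (deriv H x)^2) (2 * deriv H x * deriv F (H x)) x := by
      have := h1.fun_pow 2
      exact this.congr_deriv (by push_cast; ring)
    have h3 : HasDerivAt (fun x => F (H x)) (deriv F (H x) * deriv H x) x :=
      (hFd (H x)).hasDerivAt.comp x (hHd x).hasDerivAt
    have h4 := h2.sub (h3.const_mul 2)
    exact h4.congr_deriv (by ring)
  have hEconst : ∀ x y, E x = E y :=
    is_const_of_deriv_eq_zero (fun x => (hEderiv x).differentiableAt)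
      (fun x => (hEderiv x).deriv)
  have hElim : Tendsto E atTop (nhds 0) := by
    have h1 : Tendsto (fun x => (deriv H x)^2) atTop (nhds 0) := by
      have := hlim'_top.pow 2
      simpa using this
    have h2 : Tendsto (fun x => F (H x)) atTop (nhds 0) := by
      have := (hFd.continuous.tendsto 1).comp hlim_top
      simpa [Function.comp_def, hF1] using this
    have := h1.sub (h2.const_mul 2)
    simpa using this
  have key : ∀ x, (deriv H x)^2 = 2 * F (H x) := by
    intro x
    have h1 : Tendsto E atTop (nhds (E x)) := by
      have he : E = fun _ => E x := funext fun y => hEconst y x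
      rw [he]; exact tendsto_const_nhds
    have h2 := tendsto_nhds_unique h1 hElim
    have h3 : (deriv H x)^2 - 2 * F (H x) = 0 := h2
    linarith
  -- deriv F (±1) = 0
  have hF'1 : deriv F 1 = 0 := by
    apply deriv_lim_atTop hH'd hlim'_top
    have := (hF'c.tendsto 1).comp hlim_top
    exact this.congr (fun x => (hode x).symm)
  have hF'm1 : deriv F (-1) = 0 := by
    apply deriv_lim_atBot hH'd hlim'_bot
    have := (hF'c.tendsto (-1)).comp hlim_bot
    exact this.congr (fun x => (hode x).symm)
  -- pinning
  have hnot : ∀ c : ℝ, F c = 0 → deriv F c = 0 → (∃ x, H x = c) → ∀ x, H x = c := by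
    rintro c hFc hdc ⟨x₀, hx₀⟩
    obtain ⟨r, hr, M, hM, hquad⟩ := quad_bound hFd c hFc hdc hlip
    apply pinned H c r (Real.sqrt (2*M)) hr hHd ?_ x₀ hx₀
    intro x hx
    have h1 : (deriv H x)^2 = 2 * F (H x) := key x
    have h2 : F (H x) ≤ M * (H x - c)^2 := hquad _ hx
    have h3 : (deriv H x)^2 ≤ (2*M) * (H x - c)^2 := by nlinarith
    calc |deriv H x| = Real.sqrt ((deriv H x)^2) := (Real.sqrt_sq_eq_abs _).symm
      _ ≤ Real.sqrt ((2*M) * (H x - c)^2) := Real.sqrt_le_sqrt h3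
      _ = Real.sqrt (2*M) * |H x - c| := by
          rw [Real.sqrt_mul (by positivity), Real.sqrt_sq_eq_abs]
  have hne1 : ∀ x, H x ≠ 1 := by
    intro x hx
    have hall := hnot 1 hF1 hF'1 ⟨x, hx⟩
    have hcb : Tendsto H atBot (nhds 1) := by
      have he : H = fun _ => (1:ℝ) := funext hall
      rw [he]; exact tendsto_const_nhds
    have := tendsto_nhds_unique hcb hlim_bot
    norm_num at this
  have hnem1 : ∀ x, H x ≠ -1 := by
    intro x hx
    have hall := hnot (-1) hFm1 hF'm1 ⟨x, hx⟩
    have hcb : Tendsto H atTop (nhds (-1)) := by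
      have he : H = fun _ => (-1:ℝ) := funext hall
      rw [he]; exact tendsto_const_nhds
    have := tendsto_nhds_unique hcb hlim_top
    norm_num at this
  -- range
  obtain ⟨b₀, hb₀⟩ := eventually_atTop.mp
    (hlim_top.eventually (eventually_gt_nhds (by norm_num : (0:ℝ) < 1)))
  obtain ⟨a₀, ha₀⟩ := eventually_atBot.mp
    (hlim_bot.eventually (eventually_lt_nhds (by norm_num : (-1:ℝ) < 0)))
  have hrange : ∀ x, -1 < H x ∧ H x < 1 := by
    intro x
    constructor
    · by_contra hle
      push_neg at hle
      have hmem : (-1:ℝ) ∈ uIcc (H x) (H (max a₀ b₀ + 1)) := by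
        rw [mem_uIcc]
        left
        refine ⟨hle, ?_⟩
        have := hb₀ (max a₀ b₀ + 1) (by linarith [le_max_right a₀ b₀])
        linarith
      obtain ⟨y, _, hy⟩ := intermediate_value_uIcc hHd.continuous.continuousOn hmem
      exact hnem1 y hy
    · by_contra hle
      push_neg at hle
      have hmem : (1:ℝ) ∈ uIcc (H (min a₀ b₀ - 1)) (H x) := by
        rw [mem_uIcc]
        left
        refine ⟨?_, hle⟩
        have := ha₀ (min a₀ b₀ - 1) (by linarith [min_le_left a₀ b₀])
        linarith
      obtain ⟨y, _, hy⟩ := intermediate_value_uIcc hHd.continuous.continuousOn hmem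
      exact hne1 y hy
  have hne' : ∀ x, deriv H x ≠ 0 := by
    intro x hx
    have h1 := key x
    rw [hx] at h1
    have h2 := hFpos (H x) ⟨(hrange x).1, (hrange x).2⟩
    simp at h1
    linarith
  -- a point of positive derivative
  have hpq : min a₀ b₀ - 1 < max a₀ b₀ + 1 := by
    have := min_le_max (a := a₀) (b := b₀)
    linarith
  obtain ⟨ξ, hξm, hξ⟩ := exists_deriv_eq_slope H hpq
    hHd.continuous.continuousOn hHd.differentiableOn
  have hHp : H (min a₀ b₀ - 1) < 0 := ha₀ _ (by linarith [min_le_left a₀ b₀])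
  have hHq : 0 < H (max a₀ b₀ + 1) := hb₀ _ (by linarith [le_max_right a₀ b₀])
  have hξpos : 0 < deriv H ξ := by
    rw [hξ]
    apply div_pos <;> linarith
  intro x
  refine ⟨hrange x, ?_⟩
  rcases (hne' x).lt_or_gt with hneg | hpos
  · exfalso
    have hmem : (0:ℝ) ∈ uIcc (deriv H x) (deriv H ξ) := by
      rw [mem_uIcc]; left; exact ⟨hneg.le, hξpos.le⟩
    obtain ⟨y, _, hy⟩ := intermediate_value_uIcc hH'c.continuousOn hmem
    exact hne' y hy
  · exact hpos
end

section
/- Let μ > 0, R ∈ ℝ, let c : [R, ∞) → ℝ be continuous with c(x) ≥ μ² for all x ≥ R, and let φ : [R, ∞) → ℝ be a bounded C² solution of −φ''(x) + c(x) φ(x) = 0. Then |φ(x)| ≤ |φ(R)| e^{−μ (x − R)} for all x ≥ R. -/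
open Real Set

private lemma hasDerivAt_exp_lin (k R x : ℝ) :
    HasDerivAt (fun y => Real.exp (k * (y - R))) (k * Real.exp (k * (x - R))) x := by
  have h : HasDerivAt (fun y : ℝ => k * (y - R)) k x := by
    simpa using ((hasDerivAt_id x).sub_const R).const_mul k
  simpa [mul_comm] using h.exp

private lemma barrier_aux
    (μ R δ A : ℝ) (c φ φ' φ'' : ℝ → ℝ)
    (hμ : 0 < μ) (hδ : 0 < δ) (hA : 0 ≤ A)
    (hcl : ∀ x ∈ Ici R, μ ^ 2 ≤ c x)
    (hbd : ∃ M : ℝ, ∀ x ∈ Ici R, φ x ≤ M)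
    (hd1 : ∀ x ∈ Ici R, HasDerivAt φ (φ' x) x)
    (hd2 : ∀ x ∈ Ici R, HasDerivAt φ' (φ'' x) x)
    (heq : ∀ x ∈ Ici R, -φ'' x + c x * φ x = 0)
    (hφR : φ R ≤ A) :
    ∀ x ∈ Ici R, φ x ≤ A * Real.exp (-μ * (x - R)) + δ * Real.exp (μ * (x - R)) := by
  set ψ : ℝ → ℝ := fun y => A * Real.exp (-μ * (y - R)) + δ * Real.exp (μ * (y - R)) with hψdef
  set ψ1 : ℝ → ℝ := fun y => A * (-μ * Real.exp (-μ * (y - R))) + δ * (μ * Real.exp (μ * (y - R))) with hψ1def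
  set w : ℝ → ℝ := fun y => ψ y - φ y with hwdef
  set w1 : ℝ → ℝ := fun y => ψ1 y - φ' y with hw1def
  have hψ_eq : ∀ y, ψ y = A * Real.exp (-μ * (y - R)) + δ * Real.exp (μ * (y - R)) := fun y => rfl
  have hw_eq : ∀ y, w y = ψ y - φ y := fun y => rfl
  have hψd1 : ∀ x : ℝ, HasDerivAt ψ (ψ1 x) x := fun x =>
    ((hasDerivAt_exp_lin (-μ) R x).const_mul A).add ((hasDerivAt_exp_lin μ R x).const_mul δ)
  have hψd2 : ∀ x : ℝ, HasDerivAt ψ1 (μ ^ 2 * ψ x) x := by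
    intro x
    have h := (((hasDerivAt_exp_lin (-μ) R x).const_mul (-μ)).const_mul A).add
      (((hasDerivAt_exp_lin μ R x).const_mul μ).const_mul δ)
    have e : μ ^ 2 * ψ x
        = A * (-μ * (-μ * Real.exp (-μ * (x - R)))) + δ * (μ * (μ * Real.exp (μ * (x - R)))) := by
      rw [hψ_eq]; ring
    rw [e]
    exact h
  have hψpos : ∀ x : ℝ, 0 < ψ x := by
    intro x
    have h1 : 0 ≤ A * Real.exp (-μ * (x - R)) := mul_nonneg hA (Real.exp_pos _).le
    have h2 : 0 < δ * Real.exp (μ * (x - R)) := mul_pos hδ (Real.exp_pos _)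
    rw [hψ_eq]; linarith
  have hw1d : ∀ x ∈ Ici R, HasDerivAt w (w1 x) x := fun x hx => (hψd1 x).sub (hd1 x hx)
  have hwcont : ∀ x ∈ Ici R, ContinuousAt w x := fun x hx => (hw1d x hx).continuousAt
  -- continuous extension for closedness arguments
  set g : ℝ → ℝ := fun y => w (max y R) with hgdef
  have hgcont : Continuous g := by
    rw [continuous_iff_continuousAt]
    intro x
    have hm : ContinuousAt (fun y : ℝ => max y R) x :=
      (continuous_id.max continuous_const).continuousAt
    exact ContinuousAt.comp (x := x) (f := fun y => max y R) (g := w)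
      (hwcont (max x R) (le_max_right x R)) hm
  have hgw : ∀ x, R ≤ x → g x = w x := by
    intro x hx; show w (max x R) = w x; rw [max_eq_left hx]
  have hwR : δ ≤ w R := by
    have e : ψ R = A + δ := by rw [hψ_eq]; simp
    rw [hw_eq, e]; linarith
  intro x₁ hx₁
  by_contra hlt
  push_neg at hlt
  have hwx₁ : w x₁ < 0 := by rw [hw_eq, hψ_eq]; linarith
  have hRx₁ : R ≤ x₁ := hx₁
  -- a point beyond x₁ where w ≥ 0
  obtain ⟨M, hM⟩ := hbd
  set x₂ : ℝ := max x₁ (R + max M 0 / (δ * μ)) with hx₂def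
  have hx₂R : R ≤ x₂ := le_trans hRx₁ (le_max_left _ _)
  have hwx₂ : 0 ≤ w x₂ := by
    have h2 : max M 0 / (δ * μ) ≤ x₂ - R := by
      have := le_max_right x₁ (R + max M 0 / (δ * μ))
      rw [hx₂def] at *
      linarith [this]
    have h3 : max M 0 ≤ δ * μ * (x₂ - R) := by
      rw [div_le_iff₀ (by positivity)] at h2; linarith [h2]
    have h4 : μ * (x₂ - R) ≤ Real.exp (μ * (x₂ - R)) := by
      linarith [Real.add_one_le_exp (μ * (x₂ - R))]
    have h1 : max M 0 ≤ δ * Real.exp (μ * (x₂ - R)) := by nlinarith [h4, hδ]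
    have h5 : φ x₂ ≤ M := hM x₂ hx₂R
    have h6 : 0 ≤ A * Real.exp (-μ * (x₂ - R)) := mul_nonneg hA (Real.exp_pos _).le
    have h7 : M ≤ max M 0 := le_max_left _ _
    rw [hw_eq, hψ_eq]; linarith
  -- b : first point ≥ x₁ with w ≥ 0
  set S : Set ℝ := Ici x₁ ∩ {y | 0 ≤ g y} with hSdef
  have hSclosed : IsClosed S := isClosed_Ici.inter (isClosed_le continuous_const hgcont)
  have hSne : S.Nonempty := ⟨x₂, (show x₁ ≤ x₂ from le_max_left _ _), by
    show 0 ≤ g x₂; rw [hgw x₂ hx₂R]; exact hwx₂⟩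
  have hSbdd : BddBelow S := ⟨x₁, fun y hy => hy.1⟩
  set b : ℝ := sInf S with hbdef
  have hbS : b ∈ S := hSclosed.csInf_mem hSne hSbdd
  have hbge : x₁ ≤ b := hbS.1
  have hwb : 0 ≤ w b := by rw [← hgw b (le_trans hRx₁ hbge)]; exact hbS.2
  have hblt : x₁ < b := lt_of_le_of_ne hbge (by
    intro h; rw [← h] at hwb; linarith)
  have hbelow : ∀ y, x₁ ≤ y → y < b → w y < 0 := by
    intro y hy hyb
    by_contra h
    push_neg at h
    have hyS : y ∈ S := ⟨hy, by show 0 ≤ g y; rw [hgw y (le_trans hRx₁ hy)]; exact h⟩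
    exact absurd (csInf_le hSbdd hyS) (not_le.mpr hyb)
  -- a : last point ≤ x₁ with w ≥ 0
  set T : Set ℝ := Icc R x₁ ∩ {y | 0 ≤ g y} with hTdef
  have hTclosed : IsClosed T := isClosed_Icc.inter (isClosed_le continuous_const hgcont)
  have hTne : T.Nonempty := ⟨R, ⟨le_refl R, hRx₁⟩, by
    show 0 ≤ g R; rw [hgw R (le_refl R)]; linarith⟩
  have hTbdd : BddAbove T := ⟨x₁, fun y hy => hy.1.2⟩
  set a : ℝ := sSup T with hadef
  have haT : a ∈ T := hTclosed.csSup_mem hTne hTbdd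
  have haR : R ≤ a := haT.1.1
  have hale : a ≤ x₁ := haT.1.2
  have hwa : 0 ≤ w a := by rw [← hgw a haR]; exact haT.2
  have halt : a < x₁ := lt_of_le_of_ne hale (by
    intro h; rw [h] at hwa; linarith)
  have habove : ∀ y, a < y → y ≤ x₁ → w y < 0 := by
    intro y hay hy
    by_contra h
    push_neg at h
    have hyT : y ∈ T := ⟨⟨le_trans haR hay.le, hy⟩, by
      show 0 ≤ g y; rw [hgw y (le_trans haR hay.le)]; exact h⟩
    exact absurd (le_csSup hTbdd hyT) (not_le.mpr hay)
  have hab : a < b := lt_trans halt hblt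
  -- w negative on (a, b)
  have hneg : ∀ y ∈ Ioo a b, w y < 0 := by
    intro y hy
    rcases le_or_gt y x₁ with h | h
    · exact habove y hy.1 h
    · exact hbelow y h.le hy.2
  -- strict concavity of w on [a, b]
  have hconc : StrictConcaveOn ℝ (Icc a b) w := by
    apply strictConcaveOn_of_deriv2_neg (convex_Icc a b)
    · intro y hy
      exact (hwcont y (le_trans haR hy.1)).continuousWithinAt
    · intro y hy
      rw [interior_Icc] at hy
      have hyR : R < y := lt_of_le_of_lt haR hy.1
      have hd2' : deriv (deriv w) y < 0 := by
        have heq1 : deriv w =ᶠ[nhds y] w1 := by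
          filter_upwards [isOpen_Ioi.mem_nhds hyR] with z hz
          exact (hw1d z (show R ≤ z from le_of_lt hz)).deriv
        rw [Filter.EventuallyEq.deriv_eq heq1]
        have hw2 : HasDerivAt w1 (μ ^ 2 * ψ y - φ'' y) y := (hψd2 y).sub (hd2 y hyR.le)
        rw [hw2.deriv]
        have hcy := hcl y hyR.le
        have heqy := heq y hyR.le
        have hφy : ψ y < φ y := by
          have hn := hneg y hy
          rw [hw_eq] at hn; linarith
        have hψy : 0 < ψ y := hψpos y
        have hφ''y : φ'' y = c y * φ y := by linarith
        rw [hφ''y]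
        nlinarith [mul_nonneg (sub_nonneg.mpr hcy) (le_of_lt (lt_trans hψy hφy)),
          mul_pos (pow_pos hμ 2) (sub_pos.mpr hφy)]
      simpa [Function.iterate_succ, Function.iterate_zero, Function.comp] using hd2'
  -- contradiction via concavity
  set t : ℝ := (b - x₁) / (b - a) with htdef
  set s : ℝ := (x₁ - a) / (b - a) with hsdef
  have hba : 0 < b - a := by linarith
  have ht : 0 < t := div_pos (by linarith) hba
  have hs : 0 < s := div_pos (by linarith) hba
  have hts : t + s = 1 := by rw [htdef, hsdef]; field_simp; ring
  have hcomb : t • a + s • b = x₁ := by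
    rw [htdef, hsdef]
    simp only [smul_eq_mul]
    field_simp
    ring
  have hkey := hconc.2 (⟨le_refl a, hab.le⟩ : a ∈ Icc a b) (⟨hab.le, le_refl b⟩ : b ∈ Icc a b)
    (ne_of_lt hab) ht hs hts
  rw [hcomb] at hkey
  simp only [smul_eq_mul] at hkey
  nlinarith [mul_nonneg ht.le hwa, mul_nonneg hs.le hwb]

theorem one_dimensional_exponential_decay
    (μ R : ℝ) (c φ φ' φ'' : ℝ → ℝ) (hμ : 0 < μ)
    (hc : ContinuousOn c (Ici R))
    (hcl : ∀ x ∈ Ici R, μ ^ 2 ≤ c x)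
    (hbd : ∃ M : ℝ, ∀ x ∈ Ici R, |φ x| ≤ M)
    (hd1 : ∀ x ∈ Ici R, HasDerivAt φ (φ' x) x)
    (hd2 : ∀ x ∈ Ici R, HasDerivAt φ' (φ'' x) x)
    (heq : ∀ x ∈ Ici R, -φ'' x + c x * φ x = 0) :
    ∀ x ∈ Ici R, |φ x| ≤ |φ R| * Real.exp (-μ * (x - R)) := by
  obtain ⟨M, hM⟩ := hbd
  intro x hx
  have key : ∀ δ : ℝ, 0 < δ →
      |φ x| ≤ |φ R| * Real.exp (-μ * (x - R)) + δ * Real.exp (μ * (x - R)) := by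
    intro δ hδ
    have h1 := barrier_aux μ R δ (|φ R|) c φ φ' φ'' hμ hδ (abs_nonneg _) hcl
      ⟨M, fun y hy => le_trans (le_abs_self _) (hM y hy)⟩ hd1 hd2 heq (le_abs_self _) x hx
    have h2 := barrier_aux μ R δ (|φ R|) c (fun y => -φ y) (fun y => -φ' y) (fun y => -φ'' y)
      hμ hδ (abs_nonneg _) hcl
      ⟨M, fun y hy => le_trans (neg_le_abs _) (hM y hy)⟩
      (fun y hy => (hd1 y hy).neg) (fun y hy => (hd2 y hy).neg)
      (fun y hy => by
        have h := heq y hy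
        show -(-φ'' y) + c y * -φ y = 0
        linear_combination -h)
      (neg_le_abs (φ R)) x hx
    have h2' : -φ x ≤ |φ R| * Real.exp (-μ * (x - R)) + δ * Real.exp (μ * (x - R)) := h2
    rw [abs_le]
    constructor <;> linarith
  apply le_of_forall_pos_le_add
  intro ε hε
  have hexp : 0 < Real.exp (μ * (x - R)) := Real.exp_pos _
  have := key (ε / Real.exp (μ * (x - R))) (div_pos hε hexp)
  rwa [div_mul_cancel₀ _ (ne_of_gt hexp)] at this
end

section
/- Let H be a C² solution of H'' = F'(H) on ℝ with ½(H'(x))² = F(H(x)) and H(x) → 1 as x → +∞, where F is C³ near 1 with F(1) = 0, F'(1) = 0, and F''(1) = α₀² with α₀ > 0. Assume −1 < H < 1 and H' > 0. Then there exist constants A > 0 and C > 0 such that |H(x) − 1 + A e^{−α₀ x}| ≤ C e^{−2 α₀ x} and |H'(x) − A α₀ e^{−α₀ x}| ≤ C e^{−2 α₀ x} for all x ≥ 0. -/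
open Real Filter
set_option maxHeartbeats 1000000

lemma taylor_cubic_bound (F : ℝ → ℝ) (α₀ : ℝ)
    (hF : ContDiffAt ℝ 3 F 1) (hF1 : F 1 = 0) (hF'1 : deriv F 1 = 0)
    (hF''1 : deriv (deriv F) 1 = α₀ ^ 2) :
    ∃ δ > 0, ∃ K > 0, ∀ s, 1 - δ ≤ s → s ≤ 1 →
      |F s - α₀ ^ 2 / 2 * (1 - s) ^ 2| ≤ K * (1 - s) ^ 3 := by
  obtain ⟨U, hU, hFU⟩ := hF.contDiffOn le_rfl (by norm_num)
  obtain ⟨ε, hε, hball⟩ := Metric.mem_nhds_iff.mp hU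
  set s₀ : Set ℝ := Metric.ball 1 ε with hs₀
  have hopen : IsOpen s₀ := Metric.isOpen_ball
  have hFs : ContDiffOn ℝ 3 F s₀ := hFU.mono hball
  have hF's : ContDiffOn ℝ 2 (deriv F) s₀ := hFs.deriv_of_isOpen hopen (by norm_num)
  have hF''s : ContDiffOn ℝ 1 (deriv (deriv F)) s₀ := hF's.deriv_of_isOpen hopen (by norm_num)
  have hdF : ∀ t ∈ s₀, DifferentiableAt ℝ F t := fun t ht =>
    ((hFs.differentiableOn (by norm_num)) t ht).differentiableAt (hopen.mem_nhds ht)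
  have hdF' : ∀ t ∈ s₀, DifferentiableAt ℝ (deriv F) t := fun t ht =>
    ((hF's.differentiableOn (by norm_num)) t ht).differentiableAt (hopen.mem_nhds ht)
  have h1s : (1:ℝ) ∈ s₀ := Metric.mem_ball_self hε
  have hψ : DifferentiableAt ℝ (deriv (deriv F)) 1 :=
    ((hF''s.differentiableOn (by norm_num)) 1 h1s).differentiableAt (hopen.mem_nhds h1s)
  set c := deriv (deriv (deriv F)) 1 with hc
  have hlo := (hasDerivAt_iff_isLittleO.mp hψ.hasDerivAt).def one_pos
  have hev : ∀ᶠ t in nhds (1:ℝ), t ∈ s₀ ∧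
      ‖deriv (deriv F) t - deriv (deriv F) 1 - (t - 1) • c‖ ≤ 1 * ‖t - 1‖ :=
    (hopen.eventually_mem h1s).and hlo
  obtain ⟨δ₁, hδ₁, hδprop⟩ := Metric.eventually_nhds_iff.mp hev
  set δ := δ₁ / 2 with hδdef
  have hδ : 0 < δ := by positivity
  set K : ℝ := |c| + 1 with hKdef
  have hK : 0 < K := by positivity
  have hψb : ∀ t : ℝ, 1 - δ ≤ t → t ≤ 1 → t ∈ s₀ ∧ |deriv (deriv F) t - α₀ ^ 2| ≤ K * (1 - t) := by
    intro t ht1 ht2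
    have hd : dist t 1 < δ₁ := by
      rw [Real.dist_eq]
      have h : |t - 1| ≤ δ := abs_le.mpr ⟨by linarith, by linarith⟩
      rw [hδdef] at h
      linarith
    obtain ⟨hmem, hb⟩ := hδprop hd
    refine ⟨hmem, ?_⟩
    rw [Real.norm_eq_abs, Real.norm_eq_abs, smul_eq_mul, hF''1] at hb
    have h1 : |t - 1| = 1 - t := by rw [abs_sub_comm]; exact abs_of_nonneg (by linarith)
    have h2 : |(t - 1) * c| ≤ (1 - t) * |c| := by
      rw [abs_mul, h1]
    calc |deriv (deriv F) t - α₀ ^ 2|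
        ≤ |deriv (deriv F) t - α₀ ^ 2 - (t - 1) * c| + |(t - 1) * c| := by
          have := abs_add_le (deriv (deriv F) t - α₀ ^ 2 - (t - 1) * c) ((t - 1) * c)
          have e : deriv (deriv F) t - α₀ ^ 2 - (t - 1) * c + (t - 1) * c
              = deriv (deriv F) t - α₀ ^ 2 := by ring
          rw [e] at this
          exact this
      _ ≤ 1 * |t - 1| + (1 - t) * |c| := add_le_add hb h2
      _ = K * (1 - t) := by rw [h1, hKdef]; ring
  -- first integration: bound on deriv F
  have hg : ∀ s, 1 - δ ≤ s → s ≤ 1 → |deriv F s + α₀ ^ 2 * (1 - s)| ≤ K * (1 - s) ^ 2 := by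
    intro s hs1 hs2
    have hsub : Set.Icc s 1 ⊆ {t : ℝ | 1 - δ ≤ t ∧ t ≤ 1} := fun t ht => ⟨by linarith [ht.1], ht.2⟩
    set g : ℝ → ℝ := fun t => deriv F t + α₀ ^ 2 * (1 - t) with hgdef
    have hgd : ∀ t ∈ Set.Icc s 1, HasDerivWithinAt g (deriv (deriv F) t - α₀ ^ 2) (Set.Icc s 1) t := by
      intro t ht
      have hts := hψb t (by linarith [ht.1]) ht.2
      have h1 : HasDerivAt (deriv F) (deriv (deriv F) t) t := (hdF' t hts.1).hasDerivAt
      have h2 : HasDerivAt (fun t : ℝ => α₀ ^ 2 * (1 - t)) (α₀ ^ 2 * (-1)) t :=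
        ((hasDerivAt_id t).const_sub 1).const_mul (α₀ ^ 2)
      have := h1.add h2
      have h3 : deriv (deriv F) t + α₀ ^ 2 * (-1) = deriv (deriv F) t - α₀ ^ 2 := by ring
      rw [h3] at this
      exact this.hasDerivWithinAt
    have hbd : ∀ t ∈ Set.Icc s 1, ‖deriv (deriv F) t - α₀ ^ 2‖ ≤ K * (1 - s) := by
      intro t ht
      have hts := hψb t (by linarith [ht.1]) ht.2
      rw [Real.norm_eq_abs]
      calc |deriv (deriv F) t - α₀ ^ 2| ≤ K * (1 - t) := hts.2
        _ ≤ K * (1 - s) := by nlinarith [ht.1]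
    have := (convex_Icc s 1).norm_image_sub_le_of_norm_hasDerivWithin_le hgd hbd
      (Set.right_mem_Icc.mpr hs2) (Set.left_mem_Icc.mpr hs2)
    rw [Real.norm_eq_abs, Real.norm_eq_abs, hgdef] at this
    simp only [hF'1] at this
    have e1 : deriv F s + α₀ ^ 2 * (1 - s) - (0 + α₀ ^ 2 * (1 - 1)) = deriv F s + α₀ ^ 2 * (1 - s) := by ring
    have e2 : |s - 1| = 1 - s := by rw [abs_sub_comm]; exact abs_of_nonneg (by linarith)
    rw [e1, e2] at this
    calc |deriv F s + α₀ ^ 2 * (1 - s)| ≤ K * (1 - s) * (1 - s) := this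
      _ = K * (1 - s) ^ 2 := by ring
  -- second integration: bound on F
  refine ⟨δ, hδ, K, hK, ?_⟩
  intro s hs1 hs2
  set h : ℝ → ℝ := fun t => F t - α₀ ^ 2 / 2 * (1 - t) ^ 2 with hhdef
  have hhd : ∀ t ∈ Set.Icc s 1, HasDerivWithinAt h (deriv F t + α₀ ^ 2 * (1 - t)) (Set.Icc s 1) t := by
    intro t ht
    have hts := hψb t (by linarith [ht.1]) ht.2
    have h1 : HasDerivAt F (deriv F t) t := (hdF t hts.1).hasDerivAt
    have h2 : HasDerivAt (fun t : ℝ => (1 - t) ^ 2) ((2 : ℕ) * (1 - t) ^ 1 * (-1)) t :=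
      ((hasDerivAt_id t).const_sub 1).pow 2
    have h3 := h1.sub (h2.const_mul (α₀ ^ 2 / 2))
    have h4 : deriv F t - α₀ ^ 2 / 2 * ((2:ℕ) * (1 - t) ^ 1 * (-1)) = deriv F t + α₀ ^ 2 * (1 - t) := by
      push_cast; ring
    rw [h4] at h3
    exact h3.hasDerivWithinAt
  have hbd : ∀ t ∈ Set.Icc s 1, ‖deriv F t + α₀ ^ 2 * (1 - t)‖ ≤ K * (1 - s) ^ 2 := by
    intro t ht
    rw [Real.norm_eq_abs]
    calc |deriv F t + α₀ ^ 2 * (1 - t)| ≤ K * (1 - t) ^ 2 := hg t (by linarith [ht.1]) ht.2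
      _ ≤ K * (1 - s) ^ 2 := by
          have h0 : (0:ℝ) ≤ 1 - t := by linarith [ht.2]
          have hp := pow_le_pow_left₀ h0 (show 1 - t ≤ 1 - s by linarith [ht.1]) 2
          nlinarith [hK]
  have := (convex_Icc s 1).norm_image_sub_le_of_norm_hasDerivWithin_le hhd hbd
    (Set.right_mem_Icc.mpr hs2) (Set.left_mem_Icc.mpr hs2)
  rw [Real.norm_eq_abs, Real.norm_eq_abs, hhdef] at this
  simp only [hF1] at this
  have e1 : F s - α₀ ^ 2 / 2 * (1 - s) ^ 2 - (0 - α₀ ^ 2 / 2 * (1 - 1) ^ 2)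
      = F s - α₀ ^ 2 / 2 * (1 - s) ^ 2 := by ring
  have e2 : |s - 1| = 1 - s := by rw [abs_sub_comm]; exact abs_of_nonneg (by linarith)
  rw [e1, e2] at this
  calc |F s - α₀ ^ 2 / 2 * (1 - s) ^ 2| ≤ K * (1 - s) ^ 2 * (1 - s) := this
    _ = K * (1 - s) ^ 3 := by ring

theorem heteroclinic_refined_asymptotics
    (F H : ℝ → ℝ) (α₀ : ℝ) (hα : 0 < α₀)
    (hF : ContDiffAt ℝ 3 F 1)
    (hF1 : F 1 = 0) (hF'1 : deriv F 1 = 0)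
    (hF''1 : deriv (deriv F) 1 = α₀ ^ 2)
    (hH : ContDiff ℝ 2 H)
    (hode : ∀ x : ℝ, deriv (deriv H) x = deriv F (H x))
    (hfirst : ∀ x : ℝ, (deriv H x) ^ 2 / 2 = F (H x))
    (hlim : Tendsto H atTop (nhds 1))
    (hpin : ∀ x : ℝ, -1 < H x ∧ H x < 1)
    (hmono : ∀ x : ℝ, 0 < deriv H x) :
    ∃ (A C : ℝ), 0 < A ∧ 0 < C ∧
      ∀ x ≥ (0 : ℝ),
        |H x - 1 + A * Real.exp (-α₀ * x)| ≤ C * Real.exp (-2 * α₀ * x) ∧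
        |deriv H x - A * α₀ * Real.exp (-α₀ * x)| ≤ C * Real.exp (-2 * α₀ * x) := by
  have hα' : α₀ ≠ 0 := ne_of_gt hα
  obtain ⟨δ, hδ, K, hK, hTay⟩ := taylor_cubic_bound F α₀ hF hF1 hF'1 hF''1
  have hHd : Differentiable ℝ H := hH.differentiable (by norm_num)
  have hH2 : ContDiff ℝ (1 + 1) H := hH.of_le (by norm_num)
  have hH'c : Continuous (deriv H) :=
    ((contDiff_succ_iff_deriv.mp hH2).2.2).continuous
  set u : ℝ → ℝ := fun y => 1 - H y with hudef
  have hu_pos : ∀ x, 0 < u x := fun x => by simp only [hudef]; linarith [(hpin x).2]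
  have hu' : ∀ x, HasDerivAt u (-(deriv H x)) x := fun x => ((hHd x).hasDerivAt).const_sub 1
  set K₁ : ℝ := 2 * K / α₀ with hK₁def
  have hK₁ : 0 < K₁ := by positivity
  set δ' : ℝ := min δ (α₀ ^ 2 / (4 * K)) with hδ'def
  have hδ' : 0 < δ' := lt_min hδ (by positivity)
  obtain ⟨N, hN⟩ := (Metric.tendsto_atTop.mp hlim) δ' hδ'
  set X₀ : ℝ := max N 0 with hX₀def
  have hX₀0 : (0:ℝ) ≤ X₀ := le_max_right _ _
  have hsmall : ∀ x, X₀ ≤ x → u x < δ' := by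
    intro x hx
    have h1 := hN x (le_trans (le_max_left _ _) hx)
    rw [Real.dist_eq, abs_of_neg (by linarith [(hpin x).2] : H x - 1 < 0)] at h1
    simp only [hudef]
    linarith
  -- key pointwise estimate
  have hKey : ∀ x, X₀ ≤ x → |deriv H x - α₀ * u x| ≤ K₁ * u x ^ 2 := by
    intro x hx
    have hux := hu_pos x
    have husmall := hsmall x hx
    have hud : u x ≤ δ := le_trans husmall.le (min_le_left _ _)
    have hud' : 1 - H x ≤ δ := by simpa [hudef] using hud
    have hT := hTay (H x) (by linarith) (by linarith [(hpin x).2])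
    have huu : 1 - H x = u x := rfl
    rw [huu] at hT
    have hfx := hfirst x
    have h2 : |(deriv H x) ^ 2 - α₀ ^ 2 * u x ^ 2| ≤ 2 * K * u x ^ 3 := by
      have he : (deriv H x) ^ 2 - α₀ ^ 2 * u x ^ 2 = 2 * (F (H x) - α₀ ^ 2 / 2 * u x ^ 2) := by
        rw [← hfx]; ring
      rw [he, abs_mul, abs_of_nonneg (by norm_num : (0:ℝ) ≤ 2)]
      nlinarith [hT]
    have hpos : 0 < deriv H x + α₀ * u x := add_pos (hmono x) (by positivity)
    have hfactor : |deriv H x - α₀ * u x| * (deriv H x + α₀ * u x)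
        = |(deriv H x) ^ 2 - α₀ ^ 2 * u x ^ 2| := by
      rw [← abs_of_pos hpos, ← abs_mul]
      congr 1; ring
    have hα₀u : α₀ * u x ≤ deriv H x + α₀ * u x := by linarith [hmono x]
    have hmul : |deriv H x - α₀ * u x| * (deriv H x + α₀ * u x)
        ≤ (K₁ * u x ^ 2) * (deriv H x + α₀ * u x) := by
      rw [hfactor]
      calc |(deriv H x) ^ 2 - α₀ ^ 2 * u x ^ 2| ≤ 2 * K * u x ^ 3 := h2
        _ = (K₁ * u x ^ 2) * (α₀ * u x) := by rw [hK₁def]; field_simp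
        _ ≤ (K₁ * u x ^ 2) * (deriv H x + α₀ * u x) := by
            apply mul_le_mul_of_nonneg_left hα₀u (by positivity)
    exact le_of_mul_le_mul_right hmul hpos
  have hlow : ∀ x, X₀ ≤ x → α₀ / 2 * u x ≤ deriv H x := by
    intro x hx
    have h1 := (abs_le.mp (hKey x hx)).1
    have h2 := hsmall x hx
    have h3 : δ' ≤ α₀ ^ 2 / (4 * K) := min_le_right _ _
    have h4 : K₁ * u x ^ 2 ≤ α₀ / 2 * u x := by
      have h5 : K₁ * u x ≤ α₀ / 2 := by
        calc K₁ * u x ≤ K₁ * (α₀ ^ 2 / (4 * K)) :=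
              mul_le_mul_of_nonneg_left (le_trans h2.le h3) hK₁.le
          _ = α₀ / 2 := by rw [hK₁def]; field_simp; ring
      nlinarith [hu_pos x, mul_le_mul_of_nonneg_right h5 (hu_pos x).le]
    clear_value u K₁
    linarith
  -- Step 3 : crude decay
  set v : ℝ → ℝ := fun x => u x * Real.exp (α₀ / 2 * x) with hvdef
  have hv' : ∀ x, HasDerivAt v (-(deriv H x) * Real.exp (α₀ / 2 * x)
      + u x * (Real.exp (α₀ / 2 * x) * (α₀ / 2))) x := by
    intro x
    have h1 : HasDerivAt (fun x : ℝ => α₀ / 2 * x) (α₀ / 2) x := by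
      simpa using (hasDerivAt_id x).const_mul (α₀ / 2)
    exact (hu' x).mul h1.exp
  have hucont : Continuous u := continuous_const.sub hHd.continuous
  have hv_anti : AntitoneOn v (Set.Ici X₀) := by
    apply antitoneOn_of_deriv_nonpos (convex_Ici X₀)
    · exact (hucont.mul (Real.continuous_exp.comp (continuous_const.mul continuous_id))).continuousOn
    · exact fun x _ => ((hv' x).differentiableAt).differentiableWithinAt
    · intro x hx
      rw [interior_Ici, Set.mem_Ioi] at hx
      rw [(hv' x).deriv]
      have h1 := hlow x hx.le
      nlinarith [Real.exp_pos (α₀ / 2 * x), hu_pos x,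
        mul_le_mul_of_nonneg_right h1 (Real.exp_pos (α₀ / 2 * x)).le]
  set C₀ : ℝ := u X₀ * Real.exp (α₀ / 2 * X₀) with hC₀def
  have hC₀pos : 0 < C₀ := mul_pos (hu_pos X₀) (Real.exp_pos _)
  have hC₀b : ∀ x, X₀ ≤ x → u x ≤ C₀ * Real.exp (-(α₀ / 2) * x) := by
    intro x hx
    have hv := hv_anti Set.self_mem_Ici (Set.mem_Ici.mpr hx) hx
    have hexp : (0:ℝ) < Real.exp (α₀ / 2 * x) := Real.exp_pos _
    rw [show C₀ * Real.exp (-(α₀ / 2) * x) = C₀ / Real.exp (α₀ / 2 * x) by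
      rw [eq_div_iff (ne_of_gt hexp), mul_assoc, ← Real.exp_add,
        show -(α₀ / 2) * x + α₀ / 2 * x = 0 by ring, Real.exp_zero, mul_one]]
    rw [le_div_iff₀ hexp]
    exact hv
  -- Step 4 : sharp-rate upper and lower bounds via the log
  set L : ℝ → ℝ := fun x => Real.log (u x) + α₀ * x with hLdef
  have hL' : ∀ x, HasDerivAt L (-(deriv H x) / u x + α₀ * 1) x := fun x =>
    ((hu' x).log (ne_of_gt (hu_pos x))).add ((hasDerivAt_id x).const_mul α₀)
  have hLb : ∀ x, X₀ ≤ x → |(-(deriv H x) / u x + α₀ * 1)| ≤ K₁ * (C₀ * Real.exp (-(α₀/2) * x)) := by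
    intro x hx
    have hux := hu_pos x
    have he : -(deriv H x) / u x + α₀ * 1 = -((deriv H x - α₀ * u x) / u x) := by
      field_simp
      ring
    rw [he, abs_neg, abs_div, abs_of_pos hux, div_le_iff₀ hux]
    calc |deriv H x - α₀ * u x| ≤ K₁ * u x ^ 2 := hKey x hx
      _ = (K₁ * u x) * u x := by ring
      _ ≤ (K₁ * (C₀ * Real.exp (-(α₀/2) * x))) * u x := by
          apply mul_le_mul_of_nonneg_right _ hux.le
          exact mul_le_mul_of_nonneg_left (hC₀b x hx) hK₁.le
  set E : ℝ → ℝ := fun x => (2 * K₁ * C₀ / α₀) * Real.exp (-(α₀/2) * x) with hEdef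
  have hE' : ∀ x, HasDerivAt E (-(K₁ * (C₀ * Real.exp (-(α₀/2) * x)))) x := by
    intro x
    have h1 : HasDerivAt (fun x : ℝ => -(α₀/2) * x) (-(α₀/2)) x := by
      simpa using (hasDerivAt_id x).const_mul (-(α₀/2))
    have h2 := (h1.exp).const_mul (2 * K₁ * C₀ / α₀)
    exact h2.congr_deriv (by field_simp)
  have hEpos : ∀ x, 0 < E x := fun x => by
    simp only [hEdef]; positivity
  have hLE_anti : AntitoneOn (fun x => L x + E x) (Set.Ici X₀) := by
    apply antitoneOn_of_deriv_nonpos (convex_Ici X₀)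
    · exact (Differentiable.continuous (fun x => ((hL' x).add (hE' x)).differentiableAt)).continuousOn
    · exact fun x _ => ((hL' x).add (hE' x)).differentiableAt.differentiableWithinAt
    · intro x hx
      rw [interior_Ici, Set.mem_Ioi] at hx
      rw [show (fun x => L x + E x) = L + E from rfl, ((hL' x).add (hE' x)).deriv]
      have := (abs_le.mp (hLb x hx.le)).2
      linarith
  have hLE_mono : MonotoneOn (fun x => L x - E x) (Set.Ici X₀) := by
    apply monotoneOn_of_deriv_nonneg (convex_Ici X₀)
    · exact (Differentiable.continuous (fun x => ((hL' x).sub (hE' x)).differentiableAt)).continuousOn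
    · exact fun x _ => ((hL' x).sub (hE' x)).differentiableAt.differentiableWithinAt
    · intro x hx
      rw [interior_Ici, Set.mem_Ioi] at hx
      rw [show (fun x => L x - E x) = L - E from rfl, ((hL' x).sub (hE' x)).deriv]
      have := (abs_le.mp (hLb x hx.le)).1
      linarith
  set C₁ : ℝ := Real.exp (L X₀ + E X₀) with hC₁def
  set c₁ : ℝ := Real.exp (L X₀ - E X₀) with hc₁def
  have hC₁pos : 0 < C₁ := Real.exp_pos _
  have hc₁pos : 0 < c₁ := Real.exp_pos _
  have huexp : ∀ x, u x = Real.exp (L x) * Real.exp (-α₀ * x) := by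
    intro x
    rw [← Real.exp_add]
    simp only [hLdef]
    rw [show Real.log (u x) + α₀ * x + -α₀ * x = Real.log (u x) by ring, Real.exp_log (hu_pos x)]
  have hC₁b : ∀ x, X₀ ≤ x → u x ≤ C₁ * Real.exp (-α₀ * x) := by
    intro x hx
    rw [huexp x]
    apply mul_le_mul_of_nonneg_right _ (Real.exp_pos _).le
    apply Real.exp_le_exp.mpr
    have h1 := hLE_anti Set.self_mem_Ici (Set.mem_Ici.mpr hx) hx
    have h2 := (hEpos x).le
    simp only at h1
    linarith
  have hc₁b : ∀ x, X₀ ≤ x → c₁ * Real.exp (-α₀ * x) ≤ u x := by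
    intro x hx
    rw [huexp x]
    apply mul_le_mul_of_nonneg_right _ (Real.exp_pos _).le
    apply Real.exp_le_exp.mpr
    have h1 := hLE_mono Set.self_mem_Ici (Set.mem_Ici.mpr hx) hx
    have h2 := (hEpos x).le
    simp only at h1
    linarith
  -- Step 5 : convergence of w = u e^{α₀ x}
  set w : ℝ → ℝ := fun x => u x * Real.exp (α₀ * x) with hwdef
  have hw' : ∀ x, HasDerivAt w (-(deriv H x) * Real.exp (α₀ * x)
      + u x * (Real.exp (α₀ * x) * α₀)) x := by
    intro x
    have h1 : HasDerivAt (fun x : ℝ => α₀ * x) α₀ x := by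
      simpa using (hasDerivAt_id x).const_mul α₀
    exact (hu' x).mul h1.exp
  have hmul1 : ∀ x : ℝ, Real.exp (α₀ * x) * Real.exp (-α₀ * x) = 1 := by
    intro x
    rw [← Real.exp_add, show α₀ * x + -α₀ * x = 0 by ring, Real.exp_zero]
  set D : ℝ := K₁ * C₁ ^ 2 with hDdef
  have hD : 0 < D := mul_pos hK₁ (pow_pos hC₁pos 2)
  have hwb : ∀ x, X₀ ≤ x → |(-(deriv H x) * Real.exp (α₀ * x) + u x * (Real.exp (α₀ * x) * α₀))|
      ≤ D * Real.exp (-α₀ * x) := by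
    intro x hx
    have he := Real.exp_pos (α₀ * x)
    have h1 : -(deriv H x) * Real.exp (α₀ * x) + u x * (Real.exp (α₀ * x) * α₀)
        = -((deriv H x - α₀ * u x) * Real.exp (α₀ * x)) := by ring
    rw [h1, abs_neg, abs_mul, abs_of_pos he]
    have h2 := hKey x hx
    have h3 := hC₁b x hx
    have h4 : u x * Real.exp (α₀ * x) ≤ C₁ := by
      have h5 := mul_le_mul_of_nonneg_right h3 he.le
      rwa [mul_assoc, mul_comm (Real.exp (-α₀ * x)), hmul1 x, mul_one] at h5
    calc |deriv H x - α₀ * u x| * Real.exp (α₀ * x)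
        ≤ (K₁ * u x ^ 2) * Real.exp (α₀ * x) := mul_le_mul_of_nonneg_right h2 he.le
      _ = (K₁ * u x) * (u x * Real.exp (α₀ * x)) := by ring
      _ ≤ (K₁ * (C₁ * Real.exp (-α₀ * x))) * C₁ := by
          exact mul_le_mul (mul_le_mul_of_nonneg_left h3 hK₁.le) h4
            (mul_nonneg (hu_pos x).le he.le)
            (mul_nonneg hK₁.le (mul_nonneg hC₁pos.le (Real.exp_pos _).le))
      _ = D * Real.exp (-α₀ * x) := by rw [hDdef]; ring
  set P : ℝ → ℝ := fun x => w x + (D / α₀) * Real.exp (-α₀ * x) with hPdef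
  set Q : ℝ → ℝ := fun x => w x - (D / α₀) * Real.exp (-α₀ * x) with hQdef
  have hexpD' : ∀ x : ℝ, HasDerivAt (fun x : ℝ => (D / α₀) * Real.exp (-α₀ * x))
      (-(D * Real.exp (-α₀ * x))) x := by
    intro x
    have h1 : HasDerivAt (fun x : ℝ => -α₀ * x) (-α₀) x := by
      simpa using (hasDerivAt_id x).const_mul (-α₀)
    have h2 := (h1.exp).const_mul (D / α₀)
    exact h2.congr_deriv (by field_simp)
  have hP_anti : AntitoneOn P (Set.Ici X₀) := by
    apply antitoneOn_of_deriv_nonpos (convex_Ici X₀)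
    · exact (Differentiable.continuous (fun x => ((hw' x).add (hexpD' x)).differentiableAt)).continuousOn
    · exact fun x _ => ((hw' x).add (hexpD' x)).differentiableAt.differentiableWithinAt
    · intro x hx
      rw [interior_Ici, Set.mem_Ioi] at hx
      rw [show P = w + (fun x : ℝ => (D / α₀) * Real.exp (-α₀ * x)) from rfl, ((hw' x).add (hexpD' x)).deriv]
      have := (abs_le.mp (hwb x hx.le)).2
      linarith
  have hQ_mono : MonotoneOn Q (Set.Ici X₀) := by
    apply monotoneOn_of_deriv_nonneg (convex_Ici X₀)
    · exact (Differentiable.continuous (fun x => ((hw' x).sub (hexpD' x)).differentiableAt)).continuousOn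
    · exact fun x _ => ((hw' x).sub (hexpD' x)).differentiableAt.differentiableWithinAt
    · intro x hx
      rw [interior_Ici, Set.mem_Ioi] at hx
      rw [show Q = w - (fun x : ℝ => (D / α₀) * Real.exp (-α₀ * x)) from rfl, ((hw' x).sub (hexpD' x)).deriv]
      have := (abs_le.mp (hwb x hx.le)).1
      linarith
  have hQP : ∀ x, X₀ ≤ x → Q x ≤ P x := by
    intro x _
    simp only [hPdef, hQdef]
    have h0 := Real.exp_pos (-α₀ * x)
    nlinarith [mul_pos (mul_pos (div_pos hD hα) h0) h0, mul_pos (div_pos hD hα) h0]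
  have hne : (Q '' Set.Ici X₀).Nonempty := ⟨Q X₀, Set.mem_image_of_mem _ Set.self_mem_Ici⟩
  have hbdd : BddAbove (Q '' Set.Ici X₀) := by
    refine ⟨P X₀, ?_⟩
    rintro _ ⟨y, hy, rfl⟩
    exact le_trans (hQP y hy) (hP_anti Set.self_mem_Ici hy hy)
  set A : ℝ := sSup (Q '' Set.Ici X₀) with hAdef
  have hQA : ∀ x, X₀ ≤ x → Q x ≤ A := fun x hx =>
    le_csSup hbdd (Set.mem_image_of_mem _ hx)
  have hAP : ∀ x, X₀ ≤ x → A ≤ P x := by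
    intro x hx
    apply csSup_le hne
    rintro _ ⟨y, hy, rfl⟩
    rcases le_total y x with h | h
    · exact le_trans (hQ_mono hy (Set.mem_Ici.mpr hx) h) (hQP x hx)
    · exact le_trans (hQP y hy) (hP_anti (Set.mem_Ici.mpr hx) hy h)
  have hwlow : ∀ x, X₀ ≤ x → c₁ ≤ w x := by
    intro x hx
    have h1 := hc₁b x hx
    have h2 := mul_le_mul_of_nonneg_right h1 (Real.exp_pos (α₀ * x)).le
    simp only [hwdef]
    calc c₁ = c₁ * (Real.exp (-α₀ * x) * Real.exp (α₀ * x)) := by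
          rw [mul_comm (Real.exp (-α₀ * x)), hmul1 x, mul_one]
      _ = c₁ * Real.exp (-α₀ * x) * Real.exp (α₀ * x) := by ring
      _ ≤ u x * Real.exp (α₀ * x) := h2
  have hApos : 0 < A := by
    set t : ℝ := c₁ * α₀ / D with htdef
    have ht : 0 < t := by positivity
    set y : ℝ := max X₀ (-Real.log t / α₀ + 1) with hydef
    have hy : X₀ ≤ y := le_max_left _ _
    have h1 : -Real.log t / α₀ + 1 ≤ y := le_max_right _ _
    have h2 : Real.exp (-α₀ * y) < t := by
      have heq : α₀ * (-Real.log t / α₀ + 1) = -Real.log t + α₀ := by field_simp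
      have h3 := mul_le_mul_of_nonneg_left h1 hα.le
      rw [heq] at h3
      calc Real.exp (-α₀ * y) ≤ Real.exp (Real.log t - α₀) :=
            Real.exp_le_exp.mpr (by linarith)
        _ < Real.exp (Real.log t) := Real.exp_lt_exp.mpr (by linarith)
        _ = t := Real.exp_log ht
    have h4 : (D / α₀) * Real.exp (-α₀ * y) < c₁ := by
      have h5 : (D / α₀) * Real.exp (-α₀ * y) < (D / α₀) * t :=
        mul_lt_mul_of_pos_left h2 (by positivity)
      have h6 : (D / α₀) * t = c₁ := by rw [htdef]; field_simp
      linarith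
    have h7 : 0 < Q y := by
      simp only [hQdef]
      have := hwlow y hy
      linarith
    exact lt_of_lt_of_le h7 (hQA y hy)
  have hwA : ∀ x, X₀ ≤ x → |w x - A| ≤ (D / α₀) * Real.exp (-α₀ * x) := by
    intro x hx
    have h1 := hQA x hx
    have h2 := hAP x hx
    simp only [hPdef, hQdef] at h1 h2
    rw [abs_le]
    constructor <;> linarith
  have hexpsq : ∀ x : ℝ, Real.exp (-α₀ * x) * Real.exp (-α₀ * x) = Real.exp (-2 * α₀ * x) := by
    intro x
    rw [← Real.exp_add, show -α₀ * x + -α₀ * x = -2 * α₀ * x by ring]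
  have hudiff : ∀ x, X₀ ≤ x → |u x - A * Real.exp (-α₀ * x)| ≤ (D / α₀) * Real.exp (-2 * α₀ * x) := by
    intro x hx
    have he := Real.exp_pos (-α₀ * x)
    have h3 : u x - A * Real.exp (-α₀ * x) = (w x - A) * Real.exp (-α₀ * x) := by
      simp only [hwdef]
      linear_combination (-(u x)) * hmul1 x
    rw [h3, abs_mul, abs_of_pos he]
    calc |w x - A| * Real.exp (-α₀ * x)
        ≤ ((D / α₀) * Real.exp (-α₀ * x)) * Real.exp (-α₀ * x) :=
          mul_le_mul_of_nonneg_right (hwA x hx) he.le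
      _ = (D / α₀) * Real.exp (-2 * α₀ * x) := by rw [mul_assoc, hexpsq x]
  have htail1 : ∀ x, X₀ ≤ x →
      |H x - 1 + A * Real.exp (-α₀ * x)| ≤ (D / α₀) * Real.exp (-2 * α₀ * x) := by
    intro x hx
    have h1 := hudiff x hx
    have h2 : H x - 1 + A * Real.exp (-α₀ * x) = -(u x - A * Real.exp (-α₀ * x)) := by
      simp only [hudef]; ring
    rw [h2, abs_neg]
    exact h1
  have hu2 : ∀ x, X₀ ≤ x → u x ^ 2 ≤ C₁ ^ 2 * Real.exp (-2 * α₀ * x) := by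
    intro x hx
    have h1 := pow_le_pow_left₀ (hu_pos x).le (hC₁b x hx) 2
    calc u x ^ 2 ≤ (C₁ * Real.exp (-α₀ * x)) ^ 2 := h1
      _ = C₁ ^ 2 * (Real.exp (-α₀ * x) * Real.exp (-α₀ * x)) := by ring
      _ = C₁ ^ 2 * Real.exp (-2 * α₀ * x) := by rw [hexpsq x]
  have htail2 : ∀ x, X₀ ≤ x →
      |deriv H x - A * α₀ * Real.exp (-α₀ * x)| ≤ (K₁ * C₁ ^ 2 + D) * Real.exp (-2 * α₀ * x) := by
    intro x hx
    have h1 := hKey x hx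
    have h4 := hudiff x hx
    have h5 : deriv H x - A * α₀ * Real.exp (-α₀ * x)
        = (deriv H x - α₀ * u x) + α₀ * (u x - A * Real.exp (-α₀ * x)) := by ring
    rw [h5]
    calc |(deriv H x - α₀ * u x) + α₀ * (u x - A * Real.exp (-α₀ * x))|
        ≤ |deriv H x - α₀ * u x| + |α₀ * (u x - A * Real.exp (-α₀ * x))| := abs_add_le _ _
      _ ≤ K₁ * u x ^ 2 + α₀ * ((D / α₀) * Real.exp (-2 * α₀ * x)) := by
          refine add_le_add h1 ?_
          rw [abs_mul, abs_of_pos hα]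
          exact mul_le_mul_of_nonneg_left h4 hα.le
      _ ≤ K₁ * (C₁ ^ 2 * Real.exp (-2 * α₀ * x)) + D * Real.exp (-2 * α₀ * x) := by
          refine add_le_add (mul_le_mul_of_nonneg_left (hu2 x hx) hK₁.le) ?_
          rw [show α₀ * ((D / α₀) * Real.exp (-2 * α₀ * x)) = D * Real.exp (-2 * α₀ * x) by
            field_simp]
      _ = (K₁ * C₁ ^ 2 + D) * Real.exp (-2 * α₀ * x) := by ring
  -- final assembly
  obtain ⟨B, hB⟩ := (isCompact_Icc : IsCompact (Set.Icc (0:ℝ) X₀)).exists_bound_of_continuousOn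
    hH'c.continuousOn
  have hB0 : 0 ≤ B := le_trans (norm_nonneg _) (hB 0 (Set.mem_Icc.mpr ⟨le_refl 0, hX₀0⟩))
  set Ct : ℝ := D / α₀ + (K₁ * C₁ ^ 2 + D) with hCtdef
  have hCt : 0 < Ct := by
    have := div_pos hD hα
    have := mul_pos hK₁ (pow_pos hC₁pos 2)
    simp only [hCtdef]
    linarith
  set M : ℝ := 3 + A + B + A * α₀ with hMdef
  have hM0 : 0 < M := by
    simp only [hMdef]
    nlinarith [hApos, hB0, hα, mul_pos hApos hα]
  set Cbig : ℝ := max Ct (M * Real.exp (2 * α₀ * X₀)) with hCbigdef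
  have hCpos : 0 < Cbig := lt_of_lt_of_le hCt (le_max_left _ _)
  refine ⟨A, Cbig, hApos, hCpos, ?_⟩
  intro x hx
  rcases le_total X₀ x with hcase | hcase
  · have hCtle : Ct ≤ Cbig := le_max_left _ _
    have he2 := (Real.exp_pos (-2 * α₀ * x)).le
    constructor
    · calc |H x - 1 + A * Real.exp (-α₀ * x)| ≤ (D / α₀) * Real.exp (-2 * α₀ * x) :=
            htail1 x hcase
        _ ≤ Cbig * Real.exp (-2 * α₀ * x) := by
            apply mul_le_mul_of_nonneg_right _ he2
            have h1 : 0 ≤ K₁ * C₁ ^ 2 + D := by positivity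
            simp only [hCtdef] at hCtle
            linarith
    · calc |deriv H x - A * α₀ * Real.exp (-α₀ * x)|
          ≤ (K₁ * C₁ ^ 2 + D) * Real.exp (-2 * α₀ * x) := htail2 x hcase
        _ ≤ Cbig * Real.exp (-2 * α₀ * x) := by
            apply mul_le_mul_of_nonneg_right _ he2
            have h1 : 0 ≤ D / α₀ := (div_pos hD hα).le
            simp only [hCtdef] at hCtle
            linarith
  · have hxI : x ∈ Set.Icc (0:ℝ) X₀ := ⟨hx, hcase⟩
    have hBx := hB x hxI
    rw [Real.norm_eq_abs] at hBx
    have hexp1 : Real.exp (-α₀ * x) ≤ 1 := by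
      apply Real.exp_le_one_iff.mpr
      nlinarith [mul_nonneg hα.le hx]
    have hMle : M ≤ Cbig * Real.exp (-2 * α₀ * x) := by
      have h1 : M * Real.exp (2 * α₀ * X₀) ≤ Cbig := le_max_right _ _
      have h2 : (1:ℝ) ≤ Real.exp (2 * α₀ * X₀) * Real.exp (-2 * α₀ * x) := by
        rw [← Real.exp_add]
        apply Real.one_le_exp
        nlinarith [hα]
      calc M = M * 1 := by ring
        _ ≤ M * (Real.exp (2 * α₀ * X₀) * Real.exp (-2 * α₀ * x)) :=
            mul_le_mul_of_nonneg_left h2 hM0.le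
        _ = (M * Real.exp (2 * α₀ * X₀)) * Real.exp (-2 * α₀ * x) := by ring
        _ ≤ Cbig * Real.exp (-2 * α₀ * x) :=
            mul_le_mul_of_nonneg_right h1 (Real.exp_pos _).le
    have hAe : 0 < A * Real.exp (-α₀ * x) := by positivity
    constructor
    · have habs1 : |H x - 1| ≤ 2 :=
        abs_le.mpr ⟨by linarith [(hpin x).1], by linarith [(hpin x).2]⟩
      have habs2 : |A * Real.exp (-α₀ * x)| ≤ A := by
        rw [abs_of_pos hAe]
        nlinarith [hexp1, hApos]
      have := abs_add_le (H x - 1) (A * Real.exp (-α₀ * x))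
      have hMM : |H x - 1 + A * Real.exp (-α₀ * x)| ≤ M := by
        simp only [hMdef]
        nlinarith [hB0, mul_pos hApos hα]
      linarith
    · have habs2 : |A * α₀ * Real.exp (-α₀ * x)| ≤ A * α₀ := by
        rw [abs_of_pos (by positivity)]
        nlinarith [mul_le_mul_of_nonneg_left hexp1 (mul_pos hApos hα).le]
      have htri : |deriv H x - A * α₀ * Real.exp (-α₀ * x)|
          ≤ |deriv H x| + |A * α₀ * Real.exp (-α₀ * x)| := abs_sub _ _
      have hMM : |deriv H x - A * α₀ * Real.exp (-α₀ * x)| ≤ M := by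
        simp only [hMdef]
        nlinarith [hB0]
      linarith
end
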